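/- Let W > 0 and let σ* : (0,1) → (0,∞) be continuous, strictly decreasing, with finite right limit σ*(0+) at 0. Let ψ⁻¹ : (0,1] → [0,∞) denote the inverse of ψ (for u ∈ (0,1], ψ⁻¹(u) is the unique y ≥ 0 with ψ(y) = u). For ρ > 0 and ν > 0 define the power allocation p_{ρ,ν}(f) = (1/(ρ·σ*(f)))·ψ⁻¹(ν/(ρ·σ*(f))) if ν < ρ·σ*(f), and p_{ρ,ν}(f) = 0 otherwise. Suppose ν : (0,∞) → (0,∞) is a function such that ∫₀^1 p_{ρ,ν(ρ)}(f) df = 1/W for every ρ > 0, and define the volume of active frequencies θ(ρ) = μ({f ∈ (0,1) : p_{ρ,ν(ρ)}(f) > 0}), where μ is Lebesgue measure. Then for every ε > 0 there exists ρ̃ > 0 such that θ(ρ) < ε for all ρ ∈ (0, ρ̃). -/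

import Mathlib

open MeasureTheory Real Set

/-- `ψ(x) = ∫₀^∞ z e^{-z}/(1+xz) dz = E[z/(1+xz)]` for exponential `z` with mean one. -/
noncomputable def psi (x : ℝ) : ℝ :=
  ∫ z in Ioi (0 : ℝ), z * Real.exp (-z) / (1 + x * z)

/-- The water-filling power allocation determined by the KKT conditions:
`p_{ρ,ν}(f) = (1/(ρ σ*(f))) ψ⁻¹(ν/(ρ σ*(f)))` when `ν < ρ σ*(f)` and `0` otherwise. -/
noncomputable def palloc (σs psiInv : ℝ → ℝ) (ρ nu f : ℝ) : ℝ :=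
  if nu < ρ * σs f then (1 / (ρ * σs f)) * psiInv (nu / (ρ * σs f)) else 0

/-- Volume of active frequencies `θ(ρ) = μ({f ∈ (0,1) : p_{ρ,ν(ρ)}(f) > 0})`. -/
noncomputable def activeVolume (σs psiInv ν : ℝ → ℝ) (ρ : ℝ) : ℝ :=
  (volume {f | f ∈ Ioo (0 : ℝ) 1 ∧ 0 < palloc σs psiInv ρ (ν ρ) f}).toReal

lemma int1 : ∫ z in Ioi (0:ℝ), z * Real.exp (-z) = 1 := by
  have h := Real.Gamma_eq_integral (by norm_num : (0:ℝ) < 2)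
  have hc : ∫ z in Ioi (0:ℝ), z * Real.exp (-z)
      = ∫ x in Ioi (0:ℝ), Real.exp (-x) * x ^ ((2:ℝ)-1) := by
    refine setIntegral_congr_fun measurableSet_Ioi fun x hx => ?_
    norm_num; ring
  rw [hc, ← h, Real.Gamma_two]

lemma int2 : ∫ z in Ioi (0:ℝ), z ^ 2 * Real.exp (-z) = 2 := by
  have h := Real.Gamma_eq_integral (by norm_num : (0:ℝ) < 3)
  have h2 : Real.Gamma 3 = 2 := by
    have := Real.Gamma_nat_eq_factorial 2
    simpa using this
  have hc : ∫ z in Ioi (0:ℝ), z ^ 2 * Real.exp (-z)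
      = ∫ x in Ioi (0:ℝ), Real.exp (-x) * x ^ ((3:ℝ)-1) := by
    refine setIntegral_congr_fun measurableSet_Ioi fun x hx => ?_
    rw [show (3:ℝ) - 1 = ((2:ℕ):ℝ) by norm_num, Real.rpow_natCast]; ring
  rw [hc, ← h, h2]

lemma int1_integrable : IntegrableOn (fun z => z * Real.exp (-z)) (Ioi (0:ℝ)) := by
  have := Real.GammaIntegral_convergent (by norm_num : (0:ℝ) < 2)
  refine this.congr_fun (fun x hx => ?_) measurableSet_Ioi
  norm_num; ring

lemma int2_integrable : IntegrableOn (fun z => z ^ 2 * Real.exp (-z)) (Ioi (0:ℝ)) := by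
  have := Real.GammaIntegral_convergent (by norm_num : (0:ℝ) < 3)
  refine this.congr_fun (fun x hx => ?_) measurableSet_Ioi
  norm_num; ring

lemma psi_integrand_integrable {y : ℝ} (hy : 0 ≤ y) :
    IntegrableOn (fun z => z * Real.exp (-z) / (1 + y * z)) (Ioi (0:ℝ)) := by
  refine Integrable.mono int1_integrable ?_ ?_
  · apply ContinuousOn.aestronglyMeasurable ?_ measurableSet_Ioi
    apply ContinuousOn.div
    · exact (continuous_id.mul (continuous_exp.comp continuous_neg)).continuousOn
    · exact (continuous_const.add (continuous_const.mul continuous_id)).continuousOn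
    · intro x hx
      have : (0:ℝ) < x := hx
      positivity
  · filter_upwards [ae_restrict_mem measurableSet_Ioi] with z hz
    have hz' : (0:ℝ) < z := hz
    have h1 : (0:ℝ) < 1 + y * z := by positivity
    rw [Real.norm_eq_abs, Real.norm_eq_abs, abs_of_nonneg (by positivity),
      abs_of_nonneg (by positivity)]
    rw [div_le_iff₀ h1]
    nlinarith [mul_nonneg (mul_nonneg hz'.le (Real.exp_pos (-z)).le)
      (mul_nonneg hy hz'.le)]

lemma psi_ge {y : ℝ} (hy : 0 ≤ y) : 1 - 2 * y ≤ psi y := by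
  have key : ∫ z in Ioi (0:ℝ),
      (z * Real.exp (-z) - y * (z ^ 2 * Real.exp (-z))) = 1 - 2 * y := by
    rw [integral_sub int1_integrable (int2_integrable.const_mul y), int1,
      MeasureTheory.integral_const_mul, int2]
    ring
  rw [← key]
  apply setIntegral_mono_on (int1_integrable.sub (int2_integrable.const_mul y))
    (psi_integrand_integrable hy) measurableSet_Ioi
  intro z hz
  have hz' : (0:ℝ) < z := hz
  have h1 : (0:ℝ) < 1 + y * z := by positivity
  simp only [Pi.sub_apply]
  rw [le_div_iff₀ h1]
  nlinarith [mul_nonneg (mul_nonneg (mul_nonneg hy hy) (pow_pos hz' 3).le)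
    (Real.exp_pos (-z)).le]

/-- For every `ε > 0` there is `ρ̃ > 0` with `θ(ρ) < ε` for all `ρ ∈ (0,ρ̃)`:
the volume of active frequencies vanishes as the SNR tends to zero. -/
theorem activeVolume_small_for_small_snr (W : ℝ) (hW : 0 < W)
    (σs : ℝ → ℝ)
    (hσpos : ∀ f ∈ Ioo (0 : ℝ) 1, 0 < σs f)
    (hσcont : ContinuousOn σs (Ioo 0 1))
    (hσanti : StrictAntiOn σs (Ioo 0 1))
    (L : ℝ) (hσlim : Filter.Tendsto σs (nhdsWithin 0 (Ioi 0)) (nhds L))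
    (psiInv : ℝ → ℝ)
    (hpsiInv : ∀ u ∈ Ioc (0 : ℝ) 1, 0 ≤ psiInv u ∧ psi (psiInv u) = u)
    (ν : ℝ → ℝ) (hνpos : ∀ ρ : ℝ, 0 < ρ → 0 < ν ρ)
    (hνpower : ∀ ρ : ℝ, 0 < ρ →
      (∫ f in Ioo (0 : ℝ) 1, palloc σs psiInv ρ (ν ρ) f) = 1 / W) :
    ∀ ε > 0, ∃ ρt > 0, ∀ ρ : ℝ, 0 < ρ → ρ < ρt →
      activeVolume σs psiInv ν ρ < ε := by
  intro ε hε
  set e := min ε (1/2) with he_def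
  have he : 0 < e := lt_min hε (by norm_num)
  have heε : e ≤ ε := min_le_left _ _
  have he2 : e ≤ 1/2 := min_le_right _ _
  have ha : e/2 ∈ Ioo (0:ℝ) 1 := ⟨by positivity, by linarith⟩
  have hb : 3*e/4 ∈ Ioo (0:ℝ) 1 := ⟨by positivity, by linarith⟩
  have hab : e/2 < 3*e/4 := by linarith
  have hσa : 0 < σs (e/2) := hσpos _ ha
  have hσb : 0 < σs (3*e/4) := hσpos _ hb
  have hba : σs (3*e/4) < σs (e/2) := hσanti ha hb hab
  set u₀ : ℝ := σs (3*e/4) / σs (e/2) with hu₀_def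
  have hu₀ : u₀ < 1 := (div_lt_one hσa).2 hba
  set y₀ : ℝ := (1 - u₀)/2 with hy₀_def
  have hy₀ : 0 < y₀ := by simp only [hy₀_def]; linarith
  have hL : ∀ g ∈ Ioo (0:ℝ) 1, σs g ≤ L := by
    intro g hg
    refine ge_of_tendsto hσlim ?_
    filter_upwards [Ioo_mem_nhdsGT hg.1] with h hh
    exact (hσanti ⟨hh.1, hh.2.trans hg.2⟩ hg hh.2).le
  have hLpos : 0 < L := lt_of_lt_of_le hσa (hL _ ha)
  refine ⟨W * e * y₀ / (2 * L), by positivity, ?_⟩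
  intro ρ hρ hρt
  have hν : 0 < ν ρ := hνpos ρ hρ
  have hpow := hνpower ρ hρ
  have hInt : IntegrableOn (palloc σs psiInv ρ (ν ρ)) (Ioo (0:ℝ) 1) volume := by
    by_contra hc
    rw [MeasureTheory.integral_undef hc] at hpow
    have : (0:ℝ) < 1 / W := by positivity
    rw [← hpow] at this
    exact lt_irrefl _ this
  have hpnn : ∀ f, 0 ≤ palloc σs psiInv ρ (ν ρ) f := by
    intro f
    unfold palloc
    split
    · rename_i h
      have h0 : 0 < ρ * σs f := lt_trans hν h
      have hu : (ν ρ)/(ρ * σs f) ∈ Ioc (0:ℝ) 1 :=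
        ⟨div_pos hν h0, le_of_lt ((div_lt_one h0).2 h)⟩
      exact mul_nonneg (by positivity) (hpsiInv _ hu).1
    · exact le_refl 0
  unfold activeVolume
  set S := {f | f ∈ Ioo (0:ℝ) 1 ∧ 0 < palloc σs psiInv ρ (ν ρ) f} with hS_def
  by_contra hcon
  push_neg at hcon
  -- find an active point beyond 3e/4
  have hex : ∃ f₀ ∈ S, 3*e/4 < f₀ := by
    by_contra hno
    push_neg at hno
    have hsub : S ⊆ Ioc 0 (3*e/4) := fun f hf => ⟨hf.1.1, hno f hf⟩
    have hm := measure_mono (μ := volume) hsub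
    rw [Real.volume_Ioc] at hm
    have hm2 : (volume S).toReal ≤ (ENNReal.ofReal (3*e/4 - 0)).toReal :=
      ENNReal.toReal_mono ENNReal.ofReal_ne_top hm
    rw [ENNReal.toReal_ofReal (by linarith)] at hm2
    have : ε ≤ 3*e/4 - 0 := le_trans hcon hm2
    linarith
  obtain ⟨f₀, ⟨hf₀mem, hf₀pos⟩, hbf₀⟩ := hex
  have hcond : ν ρ < ρ * σs f₀ := by
    by_contra hc
    have hz : palloc σs psiInv ρ (ν ρ) f₀ = 0 := by unfold palloc; rw [if_neg hc]
    rw [hz] at hf₀pos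
    exact lt_irrefl _ hf₀pos
  have hσf₀b : σs f₀ < σs (3*e/4) := hσanti hb hf₀mem hbf₀
  -- lower bound for palloc on (0, e/2)
  have key : ∀ g ∈ Ioo (0:ℝ) (e/2),
      y₀ / (ρ * L) ≤ palloc σs psiInv ρ (ν ρ) g := by
    intro g hg
    have hg1 : g ∈ Ioo (0:ℝ) 1 := ⟨hg.1, lt_trans (lt_trans hg.2 hab) hb.2⟩
    have hσg : 0 < σs g := hσpos g hg1
    have hag : σs (e/2) < σs g := hσanti hg1 ha hg.2
    have hcg : ν ρ < ρ * σs g := by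
      calc ν ρ < ρ * σs f₀ := hcond
        _ < ρ * σs g := by
            apply mul_lt_mul_of_pos_left _ hρ
            exact lt_trans (lt_trans hσf₀b hba) hag
    have h0 : 0 < ρ * σs g := lt_trans hν hcg
    set u : ℝ := ν ρ / (ρ * σs g) with hu_def
    have huu : u < u₀ := by
      rw [hu_def, hu₀_def, div_lt_div_iff₀ h0 hσa]
      nlinarith
    have hu : u ∈ Ioc (0:ℝ) 1 := ⟨div_pos hν h0, le_of_lt (lt_trans huu hu₀)⟩
    obtain ⟨hnn, hval⟩ := hpsiInv u hu
    have hψ : 1 - 2 * psiInv u ≤ u := by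
      have := psi_ge hnn
      rwa [hval] at this
    have hy : y₀ ≤ psiInv u := by rw [hy₀_def]; linarith
    have hpg : palloc σs psiInv ρ (ν ρ) g = (1/(ρ * σs g)) * psiInv u := by
      unfold palloc; rw [if_pos hcg]
    rw [hpg]
    have hσgL : σs g ≤ L := hL g hg1
    calc y₀ / (ρ * L) ≤ y₀ / (ρ * σs g) := by
          apply div_le_div_of_nonneg_left hy₀.le h0
          exact mul_le_mul_of_nonneg_left hσgL hρ.le
      _ ≤ psiInv u / (ρ * σs g) := by gcongr
      _ = (1/(ρ * σs g)) * psiInv u := by ring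
  -- integral comparison
  have hInt2 : IntegrableOn (palloc σs psiInv ρ (ν ρ)) (Ioo (0:ℝ) (e/2)) volume :=
    hInt.mono_set (Ioo_subset_Ioo_right (by linarith))
  have step1 : (∫ f in Ioo (0:ℝ) (e/2), palloc σs psiInv ρ (ν ρ) f)
      ≤ ∫ f in Ioo (0:ℝ) 1, palloc σs psiInv ρ (ν ρ) f := by
    apply setIntegral_mono_set hInt
      (Filter.Eventually.of_forall hpnn)
      (HasSubset.Subset.eventuallyLE (Ioo_subset_Ioo_right (by linarith)))
  have step2 : (e/2) * (y₀ / (ρ * L))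
      ≤ ∫ f in Ioo (0:ℝ) (e/2), palloc σs psiInv ρ (ν ρ) f := by
    have hconst : (∫ _ in Ioo (0:ℝ) (e/2), (y₀ / (ρ * L)))
        = (e/2) * (y₀ / (ρ * L)) := by
      rw [setIntegral_const, Real.volume_real_Ioo_of_le (by linarith), smul_eq_mul]
      ring_nf
    rw [← hconst]
    apply setIntegral_mono_on
      (integrableOn_const (by rw [Real.volume_Ioo]; exact ENNReal.ofReal_ne_top))
      hInt2 measurableSet_Ioo key
  have hfinal : (e/2) * (y₀ / (ρ * L)) ≤ 1 / W := by
    rw [← hpow]; exact le_trans step2 step1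
  have h1 : (e/2) * (y₀ / (ρ * L)) = (e * y₀) / (2 * (ρ * L)) := by ring
  rw [h1, div_le_div_iff₀ (by positivity) hW] at hfinal
  rw [lt_div_iff₀ (by positivity)] at hρt
  nlinarith
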